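/- Define Pecker's polynomials by P₁(y₁, t) = t − y₁ and P_{m+1}(y₁,...,y_{m+1}, t) = P_m(a₁(y₁,y₂), ..., a_m(y₁,...,y_{m+1}), (t − (y₁+...+y_{m+1}))²), where a_k(y₁,...,y_{k+1}) = y_{k+1}(y₁+...+y_k). Then for all nonnegative reals y₁,...,y_m and any real root t of P_m(y₁,...,y_m, ·), one has 0 ≤ t ≤ 2(y₁ + ... + y_m). -/
import Mathlib


noncomputable def pecker : (m : ℕ) → (Fin (m + 1) → ℝ) → ℝ → ℝ
  | 0, y, t => t - y 0
  | m + 1, y, t =>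
      pecker m
        (fun k : Fin (m + 1) =>
          y k.succ * ∑ i : Fin (k.1 + 1), y ⟨i.1, by have := i.isLt; have := k.isLt; omega⟩)
        ((t - ∑ i, y i) ^ 2)

noncomputable def peckerA : (m : ℕ) → (Fin (m + 1) → ℝ) → ℝ
  | 0, y => y 0
  | m + 1, y =>
      peckerA m
        (fun k : Fin (m + 1) =>
          y k.succ * ∑ i : Fin (k.1 + 1), y ⟨i.1, by have := i.isLt; have := k.isLt; omega⟩)

lemma pecker_aux_range (f : ℕ → ℝ) (hf : ∀ i, 0 ≤ f i) (n : ℕ) :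
    2 * ∑ j ∈ Finset.range n, f (j + 1) * ∑ i ∈ Finset.range (j + 1), f i
      ≤ (∑ i ∈ Finset.range (n + 1), f i) ^ 2 := by
  induction n with
  | zero => simp; positivity
  | succ n ih =>
    rw [Finset.sum_range_succ, Finset.sum_range_succ (fun i => f i) (n + 1)]
    have h0 := hf (n + 1)
    have h1 : 0 ≤ ∑ i ∈ Finset.range (n + 1), f i := Finset.sum_nonneg fun i _ => hf i
    nlinarith [ih]

lemma pecker_key (m : ℕ) (y : Fin (m + 2) → ℝ) (hy : ∀ i, 0 ≤ y i) :
    2 * ∑ k : Fin (m + 1),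
        y k.succ * ∑ i : Fin (k.1 + 1), y ⟨i.1, by have := i.isLt; have := k.isLt; omega⟩
      ≤ (∑ i, y i) ^ 2 := by
  set f : ℕ → ℝ := fun i => if h : i < m + 2 then y ⟨i, h⟩ else 0 with hf
  have hfnn : ∀ i, 0 ≤ f i := by
    intro i; simp only [hf]; split
    · exact hy _
    · exact le_refl 0
  have hS : (∑ i, y i) = ∑ i ∈ Finset.range (m + 2), f i := by
    rw [← Fin.sum_univ_eq_sum_range]
    exact Finset.sum_congr rfl fun i _ => by simp [hf, i.isLt]
  have hT : (∑ k : Fin (m + 1),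
        y k.succ * ∑ i : Fin (k.1 + 1), y ⟨i.1, by have := i.isLt; have := k.isLt; omega⟩)
      = ∑ j ∈ Finset.range (m + 1), f (j + 1) * ∑ i ∈ Finset.range (j + 1), f i := by
    rw [← Fin.sum_univ_eq_sum_range]
    refine Finset.sum_congr rfl fun k _ => ?_
    have hk : (k : ℕ) + 1 < m + 2 := by omega
    have h1 : f ((k : ℕ) + 1) = y k.succ := by simp [hf, hk]; rfl
    rw [h1, ← Fin.sum_univ_eq_sum_range]
    congr 1
    refine Finset.sum_congr rfl fun i _ => ?_
    have hi : (i : ℕ) < m + 2 := by have := i.isLt; have := k.isLt; omega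
    simp [hf, hi]
  rw [hS, hT]
  exact pecker_aux_range f hfnn (m + 1)

/-- Pecker's bound: here `pecker m` is the polynomial $P_{m+1}$ of the paper. -/
theorem stmt13 (m : ℕ) (y : Fin (m + 1) → ℝ) (hy : ∀ i, 0 ≤ y i) (t : ℝ)
    (ht : pecker m y t = 0) : 0 ≤ t ∧ t ≤ 2 * ∑ i, y i := by
  induction m generalizing t with
  | zero =>
    have h0 := hy 0
    simp only [pecker, sub_eq_zero] at ht
    subst ht
    simp [Fin.sum_univ_one]
    constructor <;> linarith
  | succ m ih =>
    set S := ∑ i, y i with hSdef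
    have hS : 0 ≤ S := Finset.sum_nonneg fun i _ => hy i
    set y' : Fin (m + 1) → ℝ := fun k =>
      y k.succ * ∑ i : Fin (k.1 + 1), y ⟨i.1, by have := i.isLt; have := k.isLt; omega⟩
      with hy'def
    have hy' : ∀ k, 0 ≤ y' k := fun k =>
      mul_nonneg (hy _) (Finset.sum_nonneg fun i _ => hy _)
    have ht' : pecker m y' ((t - S) ^ 2) = 0 := ht
    obtain ⟨h1, h2⟩ := ih y' hy' _ ht'
    have hkey : 2 * ∑ k, y' k ≤ S ^ 2 := pecker_key m y hy
    have hsq : (t - S) ^ 2 ≤ S ^ 2 := le_trans h2 (by linarith)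
    constructor <;> nlinarith [hsq, hS]
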